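/- arXiv:2412.12996 — 2 statements merged into one kernel-verified Lean document; each statement's English description precedes it below -/
import Mathlib

section
/- Let V : ℝⁿ → ℝ be continuous with V(x) > 0 for x ∉ X_g and V = 0 on X_g, and let x(t) be a trajectory such that t ↦ V(x(t)) is differentiable with (d/dt)V(x(t)) ≤ -α(V(x(t))) for a continuous, strictly increasing function α : ℝ≥0 → ℝ≥0 with α(0) = 0, where additionally V(x(t)) → 0 implies dist(x(t), X_g) → 0. Then lim_{t→∞} dist(x(t), X_g) = 0. -/
/-- Lyapunov stability certificate (Proposition 2): the decreasing condition along the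
trajectory forces `V (x t) → 0` and hence `dist (x t, X_g) → 0`. -/
theorem stmt_4 {n : ℕ} (Xg : Set (EuclideanSpace ℝ (Fin n))) (hXg : IsClosed Xg)
    (V : EuclideanSpace ℝ (Fin n) → ℝ) (hV : Continuous V)
    (hpos : ∀ y, y ∉ Xg → 0 < V y) (hzero : ∀ y ∈ Xg, V y = 0)
    (x : ℝ → EuclideanSpace ℝ (Fin n))
    (hdiff : Differentiable ℝ (fun t => V (x t)))
    (α : ℝ → ℝ) (hαcont : Continuous α) (hαmono : StrictMonoOn α (Set.Ici 0))
    (hα0 : α 0 = 0) (hαnonneg : ∀ r, 0 ≤ r → 0 ≤ α r)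
    (hdec : ∀ t, 0 ≤ t → deriv (fun s => V (x s)) t ≤ -α (V (x t)))
    (himp : Filter.Tendsto (fun t => V (x t)) Filter.atTop (nhds 0) →
      Filter.Tendsto (fun t => Metric.infDist (x t) Xg) Filter.atTop (nhds 0)) :
    Filter.Tendsto (fun t => Metric.infDist (x t) Xg) Filter.atTop (nhds 0) := by
  apply himp
  set f : ℝ → ℝ := fun t => V (x t) with hf
  have hfnonneg : ∀ t, 0 ≤ f t := by
    intro t
    by_cases h : x t ∈ Xg
    · exact le_of_eq (hzero _ h).symm
    · exact (hpos _ h).le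
  -- f is antitone on [0, ∞)
  have hanti : AntitoneOn f (Set.Ici 0) := by
    apply antitoneOn_of_deriv_nonpos (convex_Ici 0) hdiff.continuous.continuousOn
    · exact fun t ht => (hdiff t).differentiableWithinAt
    · intro t ht
      rw [interior_Ici] at ht
      exact le_trans (hdec t (le_of_lt ht)) (neg_nonpos.2 (hαnonneg _ (hfnonneg t)))
  set F : ℝ → ℝ := fun t => f (max t 0) with hF
  have hFanti : Antitone F := fun a b hab =>
    hanti (Set.mem_Ici.2 (le_max_right a 0)) (Set.mem_Ici.2 (le_max_right b 0))
      (max_le_max hab le_rfl)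
  have hFbdd : BddBelow (Set.range F) := ⟨0, by rintro _ ⟨t, rfl⟩; exact hfnonneg _⟩
  set L : ℝ := ⨅ t, F t with hL
  have hFtend : Filter.Tendsto F Filter.atTop (nhds L) := tendsto_atTop_ciInf hFanti hFbdd
  have hLle : ∀ t, L ≤ F t := fun t => ciInf_le hFbdd t
  have hLnonneg : 0 ≤ L := le_ciInf fun t => hfnonneg _
  have hL0 : L = 0 := by
    by_contra hne
    have hLpos : 0 < L := lt_of_le_of_ne hLnonneg (Ne.symm hne)
    have hαL : 0 < α L := by
      rw [← hα0]
      exact hαmono (Set.mem_Ici.2 le_rfl) (Set.mem_Ici.2 hLnonneg) hLpos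
    -- h t := f t + α L * t is antitone on [0,∞)
    set g : ℝ → ℝ := fun t => f t + α L * t with hg
    have hgderiv : ∀ t : ℝ, HasDerivAt g (deriv f t + α L) t := by
      intro t
      have h1 : HasDerivAt f (deriv f t) t := (hdiff t).hasDerivAt
      have h2 : HasDerivAt (fun s : ℝ => α L * s) (α L) t := by
        simpa using (hasDerivAt_id t).const_mul (α L)
      exact h1.add h2
    have hganti : AntitoneOn g (Set.Ici 0) := by
      apply antitoneOn_of_deriv_nonpos (convex_Ici 0)
        (Continuous.continuousOn (hdiff.continuous.add (continuous_const.mul continuous_id)))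
      · exact fun t ht => (hgderiv t).differentiableAt.differentiableWithinAt
      · intro t ht
        rw [interior_Ici] at ht
        have hd : deriv (fun s => f s + α L * id s) t = deriv f t + α L := by
          simpa [g] using (hgderiv t).deriv
        show deriv (fun s => f s + α L * id s) t ≤ 0
        rw [hd]
        have hft : L ≤ f t := by
          have := hLle t
          simpa [hF, max_eq_left (le_of_lt (Set.mem_Ioi.1 ht))] using this
        have : α L ≤ α (f t) :=
          hαmono.monotoneOn (Set.mem_Ici.2 hLnonneg) (Set.mem_Ici.2 (hfnonneg t)) hft
        have := le_trans (hdec t ht.le) (neg_le_neg this)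
        linarith
    set T : ℝ := f 0 / α L + 1 with hT
    have hT0 : 0 ≤ f 0 / α L := div_nonneg (hfnonneg 0) hαL.le
    have hTpos : 0 < T := by rw [hT]; linarith
    have := hganti (Set.mem_Ici.2 le_rfl) (Set.mem_Ici.2 hTpos.le) hTpos.le
    -- g T ≤ g 0 = f 0, i.e. f T + α L * T ≤ f 0
    have hfT : 0 ≤ f T := hfnonneg T
    have hαLT : α L * T = f 0 + α L := by
      rw [hT]
      field_simp
    simp only [hg, mul_zero, add_zero] at this
    nlinarith
  -- conclude
  have : Filter.Tendsto F Filter.atTop (nhds 0) := hL0 ▸ hFtend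
  refine this.congr' ?_
  filter_upwards [Filter.eventually_ge_atTop (0 : ℝ)] with t ht
  simp [hF, max_eq_left ht]
end

section
/- Let g : ℝ≥0 → ℝ≥0 be differentiable with g'(t) ≤ -α(g(t)) for all t, where α : ℝ≥0 → ℝ≥0 is continuous, strictly increasing, and α(0) = 0. Then g(t) → 0 as t → ∞. -/
/-- Scalar Lyapunov decrease: if `g ≥ 0` is differentiable with `g' t ≤ -α (g t)` where
`α` is continuous, strictly increasing on `[0,∞)` with `α 0 = 0` and `α ≥ 0` on `[0,∞)`,
then `g t → 0` as `t → ∞`. -/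
theorem stmt_5 (g : ℝ → ℝ) (hg : Differentiable ℝ g)
    (hnonneg : ∀ t, 0 ≤ t → 0 ≤ g t)
    (α : ℝ → ℝ) (hαcont : Continuous α) (hαmono : StrictMonoOn α (Set.Ici 0))
    (hα0 : α 0 = 0) (hαnonneg : ∀ r, 0 ≤ r → 0 ≤ α r)
    (hdec : ∀ t, 0 ≤ t → deriv g t ≤ -α (g t)) :
    Filter.Tendsto g Filter.atTop (nhds 0) := by
  -- g is antitone on [0, ∞)
  have hganti : AntitoneOn g (Set.Ici 0) := by
    refine antitoneOn_of_deriv_nonpos (convex_Ici 0) hg.continuous.continuousOn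
      (hg.differentiableOn) ?_
    intro x hx
    rw [interior_Ici] at hx
    have hx0 : (0:ℝ) ≤ x := le_of_lt hx
    have h1 : deriv g x ≤ -α (g x) := hdec x hx0
    have hge : 0 ≤ α (g x) := hαnonneg _ (hnonneg x hx0)
    linarith
  set G : ℝ → ℝ := fun t => g (max t 0) with hG
  have hGanti : Antitone G := by
    intro s t hst
    exact hganti (Set.mem_Ici.mpr (le_max_right s 0)) (Set.mem_Ici.mpr (le_max_right t 0))
      (max_le_max hst le_rfl)
  have hGbdd : BddBelow (Set.range G) := by
    refine ⟨0, ?_⟩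
    rintro y ⟨t, rfl⟩
    exact hnonneg _ (le_max_right t 0)
  have hGtend : Filter.Tendsto G Filter.atTop (nhds (⨅ t, G t)) :=
    tendsto_atTop_ciInf hGanti hGbdd
  set L : ℝ := ⨅ t, G t with hL
  have hL0 : 0 ≤ L := le_ciInf fun t => hnonneg _ (le_max_right t 0)
  have hLle : ∀ t, L ≤ G t := fun t => ciInf_le hGbdd t
  have hLzero : L = 0 := by
    by_contra hne
    have hLpos : 0 < L := lt_of_le_of_ne hL0 (Ne.symm hne)
    have hαL : 0 < α L := by
      have := hαmono (Set.mem_Ici.mpr le_rfl) (Set.mem_Ici.mpr hL0) hLpos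
      rwa [hα0] at this
    -- g t ≥ L for all t ≥ 0
    have hgel : ∀ t, 0 ≤ t → L ≤ g t := by
      intro t ht
      have := hLle t
      simpa [hG, max_eq_left ht] using this
    -- h t = g t + α L * t is antitone on [0,∞)
    set h : ℝ → ℝ := fun t => g t + α L * t with hh
    have hhdiff : Differentiable ℝ h := hg.add (differentiable_id.const_mul _)
    have hhanti : AntitoneOn h (Set.Ici 0) := by
      refine antitoneOn_of_deriv_nonpos (convex_Ici 0) hhdiff.continuous.continuousOn
        (hhdiff.differentiableOn) ?_
      intro x hx
      rw [interior_Ici] at hx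
      have hx0 : (0:ℝ) ≤ x := le_of_lt hx
      have hd : deriv h x = deriv g x + α L := by
        rw [hh, deriv_fun_add (hg x) (by fun_prop), deriv_const_mul _ differentiableAt_id]
        simp
      show deriv h x ≤ 0
      rw [hd]
      have h1 : deriv g x ≤ -α (g x) := hdec x hx0
      have h2 : α L ≤ α (g x) :=
        hαmono.monotoneOn (Set.mem_Ici.mpr hL0) (Set.mem_Ici.mpr (hnonneg x hx0)) (hgel x hx0)
      linarith
    set t0 : ℝ := g 0 / α L + 1 with ht0
    have hg0 : 0 ≤ g 0 := hnonneg 0 le_rfl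
    have ht0pos : 0 ≤ t0 := by positivity
    have hle : h t0 ≤ h 0 := hhanti (Set.mem_Ici.mpr le_rfl) (Set.mem_Ici.mpr ht0pos) ht0pos
    have hgt0 : 0 ≤ g t0 := hnonneg t0 ht0pos
    have hmul : α L * t0 = g 0 + α L := by
      rw [ht0]
      field_simp
    have hval : g t0 + α L * t0 ≤ g 0 + α L * 0 := hle
    rw [hmul] at hval
    linarith
  rw [hLzero] at hGtend
  refine hGtend.congr' ?_
  filter_upwards [Filter.eventually_ge_atTop (0:ℝ)] with t ht
  simp [hG, max_eq_left ht]
end
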